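/- For all λ, τ ∈ ℂ with sinh(λ/2) ≠ 0, cosh(λ/2) ≠ 0 and sinh λ ≠ 0, and every integer m, tr(S(λ)^{−m} · T(λ,τ)) = 2·cosh(τ/2 + mλ)·coth(λ). In particular, tr(T(λ,τ)) = cosh(τ/2)·(coth(λ/2) + tanh(λ/2)) = 2·cosh(τ/2)·coth(λ). -/

import Mathlib

open Matrix

/-- `S(λ) = [[cosh λ, cosh λ + 1], [cosh λ − 1, cosh λ]]` -/
noncomputable def Smat (l : ℂ) : Matrix (Fin 2) (Fin 2) ℂ :=
  !![Complex.cosh l, Complex.cosh l + 1; Complex.cosh l - 1, Complex.cosh l]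

/-- `T(λ,τ) = [[cosh(τ/2)·coth(λ/2), −sinh(τ/2)], [−sinh(τ/2), cosh(τ/2)·tanh(λ/2)]]` -/
noncomputable def Tmat (l τ : ℂ) : Matrix (Fin 2) (Fin 2) ℂ :=
  !![Complex.cosh (τ/2) * (Complex.cosh (l/2) / Complex.sinh (l/2)), -Complex.sinh (τ/2);
     -Complex.sinh (τ/2), Complex.cosh (τ/2) * (Complex.sinh (l/2) / Complex.cosh (l/2))]

noncomputable def Pmat (l : ℂ) (x : ℂ) : Matrix (Fin 2) (Fin 2) ℂ :=
  !![Complex.cosh x, Complex.sinh x / Complex.sinh l * (Complex.cosh l + 1);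
     Complex.sinh x / Complex.sinh l * (Complex.cosh l - 1), Complex.cosh x]

lemma Smat_det (l : ℂ) : (Smat l).det = 1 := by
  simp [Smat, Matrix.det_fin_two_of]; ring

lemma Pmat_mul_Smat (l x : ℂ) (h3 : Complex.sinh l ≠ 0) :
    Pmat l x * Smat l = Pmat l (x + l) := by
  have key : Complex.sinh l * Complex.sinh l = Complex.cosh l ^ 2 - 1 := by
    have h := Complex.cosh_sq_sub_sinh_sq l; linear_combination -h
  ext i j
  fin_cases i <;> fin_cases j <;>
    simp [Pmat, Smat, Matrix.mul_apply, Fin.sum_univ_two, Complex.cosh_add, Complex.sinh_add] <;>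
    field_simp
  all_goals try ring
  all_goals linear_combination (-Complex.sinh x) * key

lemma Smat_zpow (l : ℂ) (h3 : Complex.sinh l ≠ 0) (n : ℤ) :
    Smat l ^ n = Pmat l (n * l) := by
  have hdet : IsUnit (Smat l).det := by rw [Smat_det]; exact isUnit_one
  have hS : IsUnit (Smat l) := (Matrix.isUnit_iff_isUnit_det _).2 hdet
  induction n using Int.induction_on with
  | zero =>
    simp [Pmat, zpow_zero]
    ext i j; fin_cases i <;> fin_cases j <;> simp [Pmat, Matrix.one_apply]
  | succ n ih =>
    rw [zpow_add_one hdet, ih, Pmat_mul_Smat l _ h3]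
    push_cast; ring_nf
  | pred n ih =>
    have e1 : Smat l ^ (-(n:ℤ) - 1) * Smat l = Smat l ^ (-(n:ℤ)) := by
      rw [← zpow_add_one hdet]; ring_nf
    have e2 : Pmat l (((-(n:ℤ) - 1 : ℤ) : ℂ) * l) * Smat l
        = Pmat l (((-(n:ℤ) : ℤ) : ℂ) * l) := by
      rw [Pmat_mul_Smat l _ h3]; push_cast; ring
    exact hS.mul_right_cancel (e1.trans (ih.trans e2.symm))

theorem trace_S_power_T (l τ : ℂ) (h1 : Complex.sinh (l/2) ≠ 0)
    (h2 : Complex.cosh (l/2) ≠ 0) (h3 : Complex.sinh l ≠ 0) (m : ℤ) :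
    (Smat l ^ (-m) * Tmat l τ).trace =
      2 * Complex.cosh (τ/2 + m * l) * (Complex.cosh l / Complex.sinh l) ∧
    (Tmat l τ).trace =
      Complex.cosh (τ/2) *
        (Complex.cosh (l/2) / Complex.sinh (l/2) + Complex.sinh (l/2) / Complex.cosh (l/2)) ∧
    (Tmat l τ).trace = 2 * Complex.cosh (τ/2) * (Complex.cosh l / Complex.sinh l) := by
  have hc : Complex.cosh l = Complex.cosh (l/2) ^ 2 + Complex.sinh (l/2) ^ 2 := by
    have h := Complex.cosh_sq_sub_sinh_sq (l/2)
    have h2' := Complex.cosh_two_mul (l/2)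
    rw [show (2:ℂ) * (l/2) = l by ring] at h2'
    linear_combination h2'
  have hs : Complex.sinh l = 2 * Complex.sinh (l/2) * Complex.cosh (l/2) := by
    have h := Complex.sinh_two_mul (l/2)
    rw [show (2:ℂ) * (l/2) = l by ring] at h
    exact h
  have h1' : Complex.sinh (l * (1/2)) ≠ 0 := by rwa [show l * (1/2) = l/2 by ring]
  have h2' : Complex.cosh (l * (1/2)) ≠ 0 := by rwa [show l * (1/2) = l/2 by ring]
  refine ⟨?_, ?_, ?_⟩
  · rw [Smat_zpow l h3 (-m)]
    have hm : ((-m : ℤ) : ℂ) * l = -((m : ℂ) * l) := by push_cast; ring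
    rw [hm]
    simp [Pmat, Tmat, Matrix.trace_fin_two, Matrix.mul_apply, Fin.sum_univ_two,
      Complex.cosh_neg, Complex.sinh_neg, Complex.cosh_add, Complex.sinh_add]
    rw [hc, hs]
    have e1 : Complex.sinh (l/2) * (Complex.sinh (l/2))⁻¹ = 1 := mul_inv_cancel₀ h1
    have e2 : Complex.cosh (l/2) * (Complex.cosh (l/2))⁻¹ = 1 := mul_inv_cancel₀ h2
    linear_combination
      (-(Complex.cosh ((m:ℂ)*l) * Complex.cosh (τ/2) * Complex.cosh (l/2) *
        (Complex.sinh (l/2))⁻¹)) * e2 +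
      (-(Complex.cosh ((m:ℂ)*l) * Complex.cosh (τ/2) * Complex.sinh (l/2) *
        (Complex.cosh (l/2))⁻¹)) * e1
  · simp [Tmat, Matrix.trace_fin_two]; ring
  · simp only [Tmat, Matrix.trace_fin_two, Matrix.cons_val', Matrix.cons_val_zero,
      Matrix.cons_val_one, Matrix.head_cons, Matrix.empty_val', Matrix.cons_val_fin_one,
      Matrix.head_fin_const, Matrix.of_apply]
    rw [hc, hs]
    have e1 : Complex.sinh (l/2) * (Complex.sinh (l/2))⁻¹ = 1 := mul_inv_cancel₀ h1
    have e2 : Complex.cosh (l/2) * (Complex.cosh (l/2))⁻¹ = 1 := mul_inv_cancel₀ h2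
    linear_combination
      (-(Complex.cosh (τ/2) * Complex.cosh (l/2) * (Complex.sinh (l/2))⁻¹)) * e2 +
      (-(Complex.cosh (τ/2) * Complex.sinh (l/2) * (Complex.cosh (l/2))⁻¹)) * e1
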